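/- If a Motzkin tree is uniquely closable and typable (i.e., exactly one closed de Bruijn lambda term has it as skeleton, and some closed simply-typed de Bruijn term has it as skeleton), then every unary node l occurring in it has a leaf v as its immediate child; in particular, in the unique closed term with this skeleton every lambda binder binds exactly the subterm l(v(0)) (an identity combinator). -/

import Mathlib

/-- Motzkin trees (binary-unary trees): leaf `v`, unary `l`, binary `a`. -/
inductive Mot : Type
  | v : Mot
  | l : Mot → Mot
  | a : Mot → Mot → Mot
deriving DecidableEq

/-- Lambda terms in de Bruijn form. -/
inductive Lam : Type
  | v : Nat → Lam
  | l : Lam → Lam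
  | a : Lam → Lam → Lam
deriving DecidableEq

/-- `t` is closed at depth `d`. -/
def Lam.closedAt : Lam → Nat → Prop
  | .v i, d => i < d
  | .l t, d => t.closedAt (d + 1)
  | .a s t, d => s.closedAt d ∧ t.closedAt d

/-- The Motzkin-tree skeleton of a de Bruijn term. -/
def Lam.skel : Lam → Mot
  | .v _ => .v
  | .l t => .l t.skel
  | .a s t => .a s.skel t.skel

/-- A Motzkin tree is uniquely closable if exactly one closed term has it as skeleton. -/
def Mot.UniquelyClosable (X : Mot) : Prop := ∃! t : Lam, t.closedAt 0 ∧ t.skel = X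

/-- Simple types: base type `o` and arrow types. -/
inductive Ty : Type
  | o : Ty
  | arr : Ty → Ty → Ty
deriving DecidableEq

/-- Typing judgment `Γ ⊢ t : A` for de Bruijn terms. -/
inductive HasTy : List Ty → Lam → Ty → Prop
  | var (Γ : List Ty) (i : ℕ) (A : Ty) : Γ[i]? = some A → HasTy Γ (.v i) A
  | lam (Γ : List Ty) (t : Lam) (A B : Ty) :
      HasTy (A :: Γ) t B → HasTy Γ (.l t) (.arr A B)
  | app (Γ : List Ty) (s t : Lam) (A B : Ty) :
      HasTy Γ s (.arr A B) → HasTy Γ t A → HasTy Γ (.a s t) B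

/-- A Motzkin tree is typable if some closed simply-typed term has it as skeleton. -/
def Mot.Typable (X : Mot) : Prop :=
  ∃ (t : Lam) (A : Ty), t.closedAt 0 ∧ HasTy [] t A ∧ t.skel = X

/-- Every unary node `l` of the Motzkin tree has a leaf `v` as its immediate child. -/
def Mot.EveryLBindsLeaf : Mot → Prop
  | .v => True
  | .l t => t = .v
  | .a s t => s.EveryLBindsLeaf ∧ t.EveryLBindsLeaf

/-- Every lambda binder of the de Bruijn term forms the identity subterm `l(v(0))`. -/
def Lam.EveryLamIsId : Lam → Prop
  | .v _ => True
  | .l t => t = .v 0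
  | .a s t => s.EveryLamIsId ∧ t.EveryLamIsId

/-! ### Auxiliary definitions -/

def Ty.size : Ty → Nat
  | .o => 1
  | .arr a b => a.size + b.size + 1

/-- Application-only term all of whose variables are `v 0`. -/
def Lam.V0App : Lam → Prop
  | .v i => i = 0
  | .l _ => False
  | .a s t => s.V0App ∧ t.V0App

/-- Motzkin tree with no unary nodes. -/
def Mot.lFree : Mot → Prop
  | .v => True
  | .l _ => False
  | .a s t => s.lFree ∧ t.lFree

/-! ### Typability side: self-application is untypable -/

lemma sizeLe (b : Lam) : ∀ (Γ : List Ty) (A T : Ty), b.V0App → Γ[0]? = some A →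
    HasTy Γ b T → Ty.size T ≤ Ty.size A ∧ ((∃ s u, b = .a s u) → Ty.size T < Ty.size A) := by
  induction b with
  | v i =>
    intro Γ A T hb hg ht
    cases ht with
    | var _ _ _ h =>
      have hi : i = 0 := hb
      subst hi
      rw [hg] at h
      cases h
      exact ⟨le_refl _, by rintro ⟨s, u, ⟨⟩⟩⟩
  | l t ih => intro _ _ _ hb _ _; exact hb.elim
  | a s u ihs ihu =>
    intro Γ A T hb hg ht
    cases ht with
    | app _ _ _ B _ hs hu =>
      have h1 := (ihs Γ A (.arr B T) hb.1 hg hs).1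
      simp only [Ty.size] at h1
      exact ⟨by omega, fun _ => by omega⟩

lemma noApp (b : Lam) : ∀ (Γ : List Ty) (A T : Ty), b.V0App → Γ[0]? = some A →
    HasTy Γ b T → ∀ s u, b = .a s u → False := by
  induction b with
  | v i => rintro _ _ _ _ _ _ s u ⟨⟩
  | l t ih => intro _ _ _ hb _ _; exact hb.elim
  | a s u ihs ihu =>
    intro Γ A T hb hg ht _ _ _
    cases ht with
    | app _ _ _ B _ hs hu =>
      have h1 := (sizeLe s Γ A (.arr B T) hb.1 hg hs).1
      simp only [Ty.size] at h1
      have hbu := hb.2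
      cases u with
      | v i =>
        have hi : i = 0 := hbu
        subst hi
        cases hu with
        | var _ _ _ h =>
          rw [hg] at h
          cases h
          omega
      | l c => exact hbu.elim
      | a u1 u2 => exact ihu Γ A B hbu hg hu u1 u2 rfl

/-! ### Closability side -/

/-- At depth ≥ 2 every closed term has a distinct closed sibling with the same skeleton. -/
lemma flipIdx (u : Lam) : ∀ e, 2 ≤ e → u.closedAt e →
    ∃ u', u'.closedAt e ∧ u'.skel = u.skel ∧ u' ≠ u := by
  induction u with
  | v i =>
    intro e he hc
    refine ⟨.v (if i = 0 then 1 else 0), ?_, rfl, ?_⟩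
    · show (if i = 0 then 1 else 0) < e
      split <;> omega
    · intro h
      have := Lam.v.inj h
      split at this <;> omega
  | l t ih =>
    intro e he hc
    obtain ⟨t', h1, h2, h3⟩ := ih (e + 1) (by omega) hc
    refine ⟨.l t', h1, ?_, ?_⟩
    · show Mot.l t'.skel = Mot.l t.skel
      rw [h2]
    · intro h; exact h3 (Lam.l.inj h)
  | a s t ihs iht =>
    intro e he hc
    obtain ⟨s', h1, h2, h3⟩ := ihs e he hc.1
    refine ⟨.a s' t, ⟨h1, hc.2⟩, ?_, ?_⟩
    · show Mot.a s'.skel t.skel = Mot.a s.skel t.skel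
      rw [h2]
    · intro h; exact h3 (Lam.a.inj h).1

lemma noP2 (X : Mot) (e : Nat) (he : 2 ≤ e) : ¬ ∃! u : Lam, u.closedAt e ∧ u.skel = X := by
  rintro ⟨u, ⟨hc, hs⟩, huniq⟩
  obtain ⟨u', h1, h2, h3⟩ := flipIdx u e he hc
  exact h3 (huniq u' ⟨h1, h2.trans hs⟩)

lemma Pl {Y : Mot} {e : Nat} (h : ∃! u : Lam, u.closedAt e ∧ u.skel = .l Y) :
    ∃! u : Lam, u.closedAt (e + 1) ∧ u.skel = Y := by
  obtain ⟨u, ⟨hc, hs⟩, huniq⟩ := h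
  cases u with
  | v i => simp [Lam.skel] at hs
  | a _ _ => simp [Lam.skel] at hs
  | l b =>
    have hY : b.skel = Y := Mot.l.inj hs
    refine ⟨b, ⟨hc, hY⟩, ?_⟩
    rintro y ⟨hy1, hy2⟩
    have : Lam.l y = Lam.l b := huniq (.l y) ⟨hy1, by show Mot.l y.skel = _; rw [hy2]⟩
    exact Lam.l.inj this

lemma Pa {Y Z : Mot} {e : Nat} (h : ∃! u : Lam, u.closedAt e ∧ u.skel = .a Y Z) :
    (∃! u : Lam, u.closedAt e ∧ u.skel = Y) ∧ (∃! u : Lam, u.closedAt e ∧ u.skel = Z) := by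
  obtain ⟨u, ⟨hc, hs⟩, huniq⟩ := h
  cases u with
  | v i => simp [Lam.skel] at hs
  | l _ => simp [Lam.skel] at hs
  | a s t =>
    have hY : s.skel = Y := (Mot.a.inj hs).1
    have hZ : t.skel = Z := (Mot.a.inj hs).2
    constructor
    · refine ⟨s, ⟨hc.1, hY⟩, ?_⟩
      rintro y ⟨hy1, hy2⟩
      have : Lam.a y t = Lam.a s t :=
        huniq (.a y t) ⟨⟨hy1, hc.2⟩, by show Mot.a y.skel t.skel = _; rw [hy2, hZ]⟩
      exact (Lam.a.inj this).1
    · refine ⟨t, ⟨hc.2, hZ⟩, ?_⟩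
      rintro y ⟨hy1, hy2⟩
      have : Lam.a s y = Lam.a s t :=
        huniq (.a s y) ⟨⟨hc.1, hy1⟩, by show Mot.a s.skel y.skel = _; rw [hy2, hY]⟩
      exact (Lam.a.inj this).2

lemma noL : ∀ (X : Mot) (e : Nat), 1 ≤ e → (∃! u : Lam, u.closedAt e ∧ u.skel = X) → X.lFree
  | .v, _, _, _ => trivial
  | .l Y, e, _, h => absurd (Pl h) (noP2 Y (e + 1) (by omega))
  | .a Y Z, e, he, h => ⟨noL Y e he (Pa h).1, noL Z e he (Pa h).2⟩

lemma v0 : ∀ (b : Lam), b.closedAt 1 → b.skel.lFree → b.V0App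
  | .v i, hc, _ => by
      have : i < 1 := hc
      show i = 0
      omega
  | .l t, _, hf => hf.elim
  | .a s t, hc, hf => ⟨v0 s hc.1 hf.1, v0 t hc.2 hf.2⟩

lemma main : ∀ (t : Lam) (Γ : List Ty) (A : Ty), HasTy Γ t A → t.closedAt Γ.length →
    (∃! u : Lam, u.closedAt Γ.length ∧ u.skel = t.skel) → t.EveryLamIsId := by
  intro t
  induction t with
  | v i => intro _ _ _ _ _; trivial
  | l b ih =>
    intro Γ A hty hc hP
    cases hty with
    | lam _ _ A1 B hb =>
      show b = .v 0
      have hP' : ∃! u : Lam, u.closedAt (Γ.length + 1) ∧ u.skel = b.skel := Pl hP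
      have hc' : b.closedAt (Γ.length + 1) := hc
      cases b with
      | v i =>
        obtain ⟨w, _, huniq⟩ := hP'
        have h1 : Lam.v i = w := huniq (.v i) ⟨hc', rfl⟩
        have h2 : Lam.v 0 = w := huniq (.v 0) ⟨Nat.succ_pos _, rfl⟩
        exact h1.trans h2.symm
      | l c => exact absurd (Pl hP') (noP2 _ _ (by omega))
      | a s u =>
        exfalso
        rcases Nat.eq_zero_or_pos Γ.length with h0 | h1
        · rw [h0] at hP' hc'
          have hfree : (Lam.a s u).skel.lFree := noL _ 1 le_rfl hP'
          have hv0 : (Lam.a s u).V0App := v0 _ hc' hfree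
          exact noApp _ (A1 :: Γ) A1 B hv0 rfl hb s u rfl
        · exact absurd hP' (noP2 _ _ (by omega))
  | a s u ihs ihu =>
    intro Γ A hty hc hP
    cases hty with
    | app _ _ _ B _ hs hu =>
      have h := Pa hP
      exact ⟨ihs Γ (.arr B A) hs hc.1 h.1, ihu Γ B hu hc.2 h.2⟩

lemma skelOfId : ∀ t : Lam, t.EveryLamIsId → t.skel.EveryLBindsLeaf
  | .v _, _ => trivial
  | .l b, h => by
      show b.skel = .v
      have hb : b = .v 0 := h
      rw [hb]
      rfl
  | .a s t, h => ⟨skelOfId s h.1, skelOfId t h.2⟩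

theorem stmt17 (X : Mot) (hu : X.UniquelyClosable) (ht : X.Typable) :
    X.EveryLBindsLeaf ∧
    ∀ t : Lam, t.closedAt 0 → t.skel = X → t.EveryLamIsId := by
  obtain ⟨t₀, A, hc, hty, hskel⟩ := ht
  have hP : ∃! u : Lam, u.closedAt 0 ∧ u.skel = t₀.skel := hskel ▸ hu
  have hId : t₀.EveryLamIsId := main t₀ [] A hty hc hP
  refine ⟨hskel ▸ skelOfId t₀ hId, ?_⟩
  intro t htc hts
  obtain ⟨w, _, huniq⟩ := hu
  have h1 : t = w := huniq t ⟨htc, hts⟩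
  have h2 : t₀ = w := huniq t₀ ⟨hc, hskel⟩
  rw [h1.trans h2.symm]
  exact hId
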